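/- arXiv:math/0507576 — 2 statements merged into one kernel-verified Lean document; each statement's English description precedes it below -/
import Mathlib

section
/- The function w(y) = (log log(1/|y|))^n defined on the punctured unit ball {y ∈ ℝⁿ : 0 < |y| < 1/e^e} satisfies the Muckenhoupt A_n condition on balls centered at the origin: there exists C < ∞ such that for all 0 < r₀ < 1/e^e, (r₀^{-n} ∫₀^{r₀} (log log(1/r))^n r^{n-1} dr) · (r₀^{-n} ∫₀^{r₀} (log log(1/r))^{n/(1-n)} r^{n-1} dr)^{n-1} ≤ C. -/
open MeasureTheory Real Set

set_option maxHeartbeats 1000000 in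
/-- The weight `w(y) = (log log (1/|y|))^n` satisfies the Muckenhoupt `A_n`
condition on balls centered at the origin: the product of the averages is
uniformly bounded for `0 < r₀ < e^{-e}`. -/
theorem stmt0 (n : ℕ) (hn : 2 ≤ n) :
    ∃ C : ℝ, ∀ r₀ : ℝ, 0 < r₀ → r₀ < Real.exp (-(Real.exp 1)) →
      (r₀ ^ (-(n : ℝ)) *
          ∫ r in Set.Ioo (0:ℝ) r₀, (Real.log (Real.log (1/r))) ^ n * r ^ (n - 1)) *
      (r₀ ^ (-(n : ℝ)) *
          ∫ r in Set.Ioo (0:ℝ) r₀,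
            (Real.log (Real.log (1/r))) ^ ((n : ℝ) / (1 - (n : ℝ))) * r ^ (n - 1)) ^ (n - 1)
        ≤ C := by
  have hn1 : 1 ≤ n := le_trans (by norm_num) hn
  have hnR : (2:ℝ) ≤ (n:ℝ) := by exact_mod_cast hn
  have hnpos : (0:ℝ) < (n:ℝ) := by linarith
  refine ⟨2 ^ n * (1 + (2 * (n:ℝ)) ^ n), ?_⟩
  intro r₀ hr₀ hr₀e
  -- basic quantities
  have hlogr₀ : Real.log r₀ < -(Real.exp 1) := by
    have h := Real.log_lt_log hr₀ hr₀e
    rwa [Real.log_exp] at h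
  set s : ℝ := Real.log (1 / r₀) with hs_def
  have hse : Real.exp 1 < s := by
    rw [hs_def, one_div, Real.log_inv]; linarith
  have hs1 : 1 < s := by
    have h2 : (1:ℝ) + 1 ≤ Real.exp 1 := Real.add_one_le_exp 1
    linarith
  have hs0 : (0:ℝ) < s := by linarith
  set L : ℝ := Real.log s with hL_def
  have hL1 : 1 < L := by
    have := Real.log_lt_log (Real.exp_pos 1) hse
    rwa [Real.log_exp] at this
  have hL0 : (0:ℝ) < L := by linarith
  -- the exponent of the second integrand
  set c : ℝ := (n : ℝ) / (1 - (n : ℝ)) with hc_def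
  have hc_nonpos : c ≤ 0 := div_nonpos_of_nonneg_of_nonpos (by positivity) (by linarith)
  -- pointwise facts on Ioo 0 r₀
  have hsplit : ∀ r ∈ Ioo (0:ℝ) r₀, Real.log (1/r) = s + Real.log (r₀ / r) := by
    intro r hr
    obtain ⟨hr0, hrr⟩ := hr
    rw [hs_def, ← Real.log_mul (by positivity) (by positivity)]
    congr 1
    field_simp
  have hmono : ∀ r ∈ Ioo (0:ℝ) r₀, L ≤ Real.log (Real.log (1/r)) := by
    intro r hr
    obtain ⟨hr0, hrr⟩ := hr
    rw [hsplit r ⟨hr0, hrr⟩]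
    refine Real.log_le_log hs0 (le_add_of_nonneg_right ?_)
    exact (Real.log_nonneg (by rw [le_div_iff₀ hr0]; linarith))
  have hupper : ∀ r ∈ Ioo (0:ℝ) r₀,
      Real.log (Real.log (1/r)) ≤ L + Real.log (r₀ / r) := by
    intro r hr
    obtain ⟨hr0, hrr⟩ := hr
    set u : ℝ := Real.log (r₀ / r) with hu_def
    have hu0 : 0 < u := Real.log_pos (by rw [lt_div_iff₀ hr0]; linarith)
    rw [hsplit r ⟨hr0, hrr⟩]
    have h1 : s + u ≤ s * Real.exp u := by
      have h2 := Real.add_one_le_exp u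
      nlinarith
    calc Real.log (s + u) ≤ Real.log (s * Real.exp u) :=
          Real.log_le_log (by positivity) h1
      _ = L + u := by
          rw [Real.log_mul (by positivity) (Real.exp_ne_zero u), Real.log_exp]
  -- bound for the first integrand
  have hf1 : ∀ r ∈ Ioo (0:ℝ) r₀,
      (Real.log (Real.log (1/r))) ^ n * r ^ (n - 1)
        ≤ (2 ^ n * (L ^ n + (2 * (n:ℝ)) ^ n)) * r₀ ^ (n - 1) := by
    intro r hr
    obtain ⟨hr0, hrr⟩ := hr
    set u : ℝ := Real.log (r₀ / r) with hu_def
    have hx1 : (1:ℝ) < r₀ / r := by rw [lt_div_iff₀ hr0]; linarith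
    have hu0 : 0 < u := Real.log_pos hx1
    have hLL0 : 0 ≤ Real.log (Real.log (1/r)) := le_trans (by linarith) (hmono r ⟨hr0, hrr⟩)
    -- (L+u)^n ≤ 2^n (L^n + u^n)
    have hmax : L + u ≤ 2 * max L u := by
      have := le_max_left L u
      have := le_max_right L u
      linarith
    have h2n : (L + u) ^ n ≤ 2 ^ n * (L ^ n + u ^ n) := by
      calc (L + u) ^ n ≤ (2 * max L u) ^ n :=
            pow_le_pow_left₀ (by positivity) hmax n
        _ = 2 ^ n * (max L u) ^ n := by rw [mul_pow]
        _ ≤ 2 ^ n * (L ^ n + u ^ n) := by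
            refine mul_le_mul_of_nonneg_left ?_ (by positivity)
            rcases le_total L u with h | h
            · rw [max_eq_right h]
              nlinarith [pow_nonneg hL0.le n]
            · rw [max_eq_left h]
              nlinarith [pow_nonneg hu0.le n]
    -- u^n ≤ (2n)^n (r₀/r)^(1/2)
    have hε : (0:ℝ) < 1 / (2 * (n:ℝ)) := by positivity
    have hxpos : (0:ℝ) < r₀ / r := by linarith
    have hlr : Real.log ((r₀/r) ^ ((1/(2*(n:ℝ))) : ℝ)) = (1/(2*(n:ℝ))) * u :=
      Real.log_rpow hxpos _
    have hloglin : u ≤ (2 * (n:ℝ)) * (r₀/r) ^ ((1/(2*(n:ℝ))) : ℝ) := by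
      have h2 : Real.log ((r₀/r) ^ ((1/(2*(n:ℝ))) : ℝ)) ≤ (r₀/r) ^ ((1/(2*(n:ℝ))) : ℝ) := by
        have := Real.log_le_sub_one_of_pos (x := (r₀/r) ^ ((1/(2*(n:ℝ))) : ℝ)) (by positivity)
        linarith
      have h3 : (1/(2*(n:ℝ))) * u ≤ (r₀/r) ^ ((1/(2*(n:ℝ))) : ℝ) := by
        rw [← hlr]; exact h2
      have h4 := mul_le_mul_of_nonneg_left h3 (by positivity : (0:ℝ) ≤ 2 * (n:ℝ))
      have h5 : (2*(n:ℝ)) * ((1/(2*(n:ℝ))) * u) = u := by field_simp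
      linarith
    have hun : u ^ n ≤ (2 * (n:ℝ)) ^ n * (r₀/r) ^ ((1:ℝ)/2) := by
      calc u ^ n ≤ ((2 * (n:ℝ)) * (r₀/r) ^ ((1/(2*(n:ℝ))) : ℝ)) ^ n :=
            pow_le_pow_left₀ hu0.le hloglin n
        _ = (2 * (n:ℝ)) ^ n * ((r₀/r) ^ ((1/(2*(n:ℝ))) : ℝ)) ^ n := by rw [mul_pow]
        _ = (2 * (n:ℝ)) ^ n * (r₀/r) ^ ((1:ℝ)/2) := by
            congr 1
            rw [← Real.rpow_natCast ((r₀/r) ^ ((1/(2*(n:ℝ))) : ℝ)) n,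
              ← Real.rpow_mul hxpos.le]
            congr 1
            field_simp
    -- (r₀/r)^(1/2) * r^(n-1) ≤ r₀^(n-1)
    have hr_pow : (r₀/r) ^ ((1:ℝ)/2) * r ^ (n-1) ≤ r₀ ^ (n-1) := by
      have hcast : ((n - 1 : ℕ) : ℝ) = (n:ℝ) - 1 := by
        push_cast [Nat.cast_sub hn1]; ring
      rw [← Real.rpow_natCast r (n-1), ← Real.rpow_natCast r₀ (n-1), hcast,
        Real.div_rpow hr₀.le hr0.le]
      have key : r₀ ^ ((1:ℝ)/2) / r ^ ((1:ℝ)/2) * r ^ ((n:ℝ) - 1)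
          = r₀ ^ ((1:ℝ)/2) * r ^ ((n:ℝ) - 1 - 1/2) := by
        rw [Real.rpow_sub hr0 ((n:ℝ) - 1) (1/2)]
        ring
      rw [key]
      have h6 : r ^ ((n:ℝ) - 1 - 1/2) ≤ r₀ ^ ((n:ℝ) - 1 - 1/2) :=
        Real.rpow_le_rpow hr0.le hrr.le (by linarith)
      calc r₀ ^ ((1:ℝ)/2) * r ^ ((n:ℝ) - 1 - 1/2)
          ≤ r₀ ^ ((1:ℝ)/2) * r₀ ^ ((n:ℝ) - 1 - 1/2) :=
            mul_le_mul_of_nonneg_left h6 (Real.rpow_nonneg hr₀.le _)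
        _ = r₀ ^ ((n:ℝ) - 1) := by
            rw [← Real.rpow_add hr₀]; congr 1; ring
    have hrpow_nonneg : (0:ℝ) ≤ r ^ (n-1) := by positivity
    have hr₀pow_nonneg : (0:ℝ) ≤ r₀ ^ (n-1) := by positivity
    calc (Real.log (Real.log (1/r))) ^ n * r ^ (n - 1)
        ≤ (L + u) ^ n * r ^ (n-1) :=
          mul_le_mul_of_nonneg_right
            (pow_le_pow_left₀ hLL0 (hupper r ⟨hr0, hrr⟩) n) hrpow_nonneg
      _ ≤ (2 ^ n * (L ^ n + u ^ n)) * r ^ (n-1) :=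
          mul_le_mul_of_nonneg_right h2n hrpow_nonneg
      _ = 2 ^ n * (L ^ n * r ^ (n-1)) + 2 ^ n * (u ^ n * r ^ (n-1)) := by ring
      _ ≤ 2 ^ n * (L ^ n * r₀ ^ (n-1))
            + 2 ^ n * ((2 * (n:ℝ)) ^ n * ((r₀/r) ^ ((1:ℝ)/2) * r ^ (n-1))) := by
          have t1 : L ^ n * r ^ (n-1) ≤ L ^ n * r₀ ^ (n-1) :=
            mul_le_mul_of_nonneg_left (pow_le_pow_left₀ hr0.le hrr.le (n-1))
              (by positivity)
          have t2 : u ^ n * r ^ (n-1)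
              ≤ (2 * (n:ℝ)) ^ n * ((r₀/r) ^ ((1:ℝ)/2) * r ^ (n-1)) := by
            have := mul_le_mul_of_nonneg_right hun hrpow_nonneg
            calc u ^ n * r ^ (n-1)
                ≤ (2 * (n:ℝ)) ^ n * (r₀/r) ^ ((1:ℝ)/2) * r ^ (n-1) := this
              _ = (2 * (n:ℝ)) ^ n * ((r₀/r) ^ ((1:ℝ)/2) * r ^ (n-1)) := by ring
          have h2nn : (0:ℝ) ≤ 2 ^ n := by positivity
          have := mul_le_mul_of_nonneg_left t1 h2nn
          have := mul_le_mul_of_nonneg_left t2 h2nn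
          linarith
      _ ≤ 2 ^ n * (L ^ n * r₀ ^ (n-1)) + 2 ^ n * ((2 * (n:ℝ)) ^ n * r₀ ^ (n-1)) := by
          have h8 := mul_le_mul_of_nonneg_left
            (mul_le_mul_of_nonneg_left hr_pow
              (by positivity : (0:ℝ) ≤ (2 * (n:ℝ)) ^ n))
            (by positivity : (0:ℝ) ≤ (2:ℝ) ^ n)
          linarith
      _ = (2 ^ n * (L ^ n + (2 * (n:ℝ)) ^ n)) * r₀ ^ (n - 1) := by ring
  -- bound for the second integrand
  have hf2 : ∀ r ∈ Ioo (0:ℝ) r₀,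
      (Real.log (Real.log (1/r))) ^ c * r ^ (n - 1) ≤ L ^ c * r₀ ^ (n - 1) := by
    intro r hr
    obtain ⟨hr0, hrr⟩ := hr
    have hm := hmono r ⟨hr0, hrr⟩
    have h1 : (Real.log (Real.log (1/r))) ^ c ≤ L ^ c :=
      Real.rpow_le_rpow_of_nonpos hL0 hm hc_nonpos
    have h2 : r ^ (n-1) ≤ r₀ ^ (n-1) := pow_le_pow_left₀ hr0.le hrr.le (n-1)
    have h3 : (0:ℝ) ≤ (Real.log (Real.log (1/r))) ^ c :=
      Real.rpow_nonneg (le_trans hL0.le hm) c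
    have h4 : (0:ℝ) ≤ L ^ c := Real.rpow_nonneg hL0.le c
    exact mul_le_mul h1 h2 (by positivity) h4
  -- integrability of constants and integral bounds
  have hIoo_lt : volume (Ioo (0:ℝ) r₀) < ⊤ := measure_Ioo_lt_top
  have hvol : (volume (Ioo (0:ℝ) r₀)).toReal = r₀ := by
    rw [Real.volume_Ioo, ENNReal.toReal_ofReal (by linarith)]
    ring
  have hbound : ∀ (f : ℝ → ℝ) (M : ℝ),
      (∀ r ∈ Ioo (0:ℝ) r₀, 0 ≤ f r) → (∀ r ∈ Ioo (0:ℝ) r₀, f r ≤ M) →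
      ∫ r in Ioo (0:ℝ) r₀, f r ≤ M * r₀ := by
    intro f M hf0 hfM
    have hgi : Integrable (fun _ : ℝ => M) (volume.restrict (Ioo (0:ℝ) r₀)) :=
      integrableOn_const hIoo_lt.ne
    have h0 : 0 ≤ᵐ[volume.restrict (Ioo (0:ℝ) r₀)] f :=
      (ae_restrict_iff' measurableSet_Ioo).2
        (Filter.Eventually.of_forall fun r hr => hf0 r hr)
    have hle : f ≤ᵐ[volume.restrict (Ioo (0:ℝ) r₀)] fun _ => M :=
      (ae_restrict_iff' measurableSet_Ioo).2
        (Filter.Eventually.of_forall fun r hr => hfM r hr)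
    calc ∫ r in Ioo (0:ℝ) r₀, f r ≤ ∫ _ in Ioo (0:ℝ) r₀, M :=
          integral_mono_of_nonneg h0 hgi hle
      _ = M * r₀ := by rw [setIntegral_const, Measure.real, hvol, smul_eq_mul, mul_comm]
  have hI1 : ∫ r in Ioo (0:ℝ) r₀, (Real.log (Real.log (1/r))) ^ n * r ^ (n - 1)
      ≤ (2 ^ n * (L ^ n + (2 * (n:ℝ)) ^ n)) * r₀ ^ (n - 1) * r₀ := by
    apply hbound
    · intro r hr
      have := hmono r hr
      have h0 : (0:ℝ) ≤ Real.log (Real.log (1/r)) := by linarith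
      exact mul_nonneg (pow_nonneg h0 n) (pow_nonneg hr.1.le _)
    · exact hf1
  have hI2 : ∫ r in Ioo (0:ℝ) r₀, (Real.log (Real.log (1/r))) ^ c * r ^ (n - 1)
      ≤ L ^ c * r₀ ^ (n - 1) * r₀ := by
    apply hbound
    · intro r hr
      have := hmono r hr
      have h0 : (0:ℝ) ≤ Real.log (Real.log (1/r)) := by linarith
      exact mul_nonneg (Real.rpow_nonneg h0 c) (pow_nonneg hr.1.le _)
    · exact hf2
  have hI2nonneg : 0 ≤ ∫ r in Ioo (0:ℝ) r₀, (Real.log (Real.log (1/r))) ^ c * r ^ (n - 1) := by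
    refine setIntegral_nonneg measurableSet_Ioo fun r hr => ?_
    have := hmono r hr
    have h0 : (0:ℝ) ≤ Real.log (Real.log (1/r)) := by linarith
    exact mul_nonneg (Real.rpow_nonneg h0 c) (pow_nonneg hr.1.le _)
  -- r₀ power cancellation
  have hrn : r₀ ^ (n - 1) * r₀ = r₀ ^ n := by
    rw [← pow_succ]; congr 1; omega
  have hcancel : r₀ ^ (-(n:ℝ)) * r₀ ^ n = 1 := by
    rw [← Real.rpow_natCast r₀ n, ← Real.rpow_add hr₀, neg_add_cancel, Real.rpow_zero]
  have hrneg : (0:ℝ) ≤ r₀ ^ (-(n:ℝ)) := Real.rpow_nonneg hr₀.le _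
  -- the two averaged factors
  set A : ℝ := 2 ^ n * (L ^ n + (2 * (n:ℝ)) ^ n) with hA_def
  have hA0 : 0 ≤ A := by positivity
  have hfac1 : r₀ ^ (-(n:ℝ)) *
      (∫ r in Ioo (0:ℝ) r₀, (Real.log (Real.log (1/r))) ^ n * r ^ (n - 1)) ≤ A := by
    calc r₀ ^ (-(n:ℝ)) *
        (∫ r in Ioo (0:ℝ) r₀, (Real.log (Real.log (1/r))) ^ n * r ^ (n - 1))
        ≤ r₀ ^ (-(n:ℝ)) * (A * r₀ ^ (n - 1) * r₀) :=
          mul_le_mul_of_nonneg_left hI1 hrneg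
      _ = A * (r₀ ^ (-(n:ℝ)) * (r₀ ^ (n-1) * r₀)) := by ring
      _ = A := by rw [hrn, hcancel, mul_one]
  have hfac2 : r₀ ^ (-(n:ℝ)) *
      (∫ r in Ioo (0:ℝ) r₀, (Real.log (Real.log (1/r))) ^ c * r ^ (n - 1)) ≤ L ^ c := by
    calc r₀ ^ (-(n:ℝ)) *
        (∫ r in Ioo (0:ℝ) r₀, (Real.log (Real.log (1/r))) ^ c * r ^ (n - 1))
        ≤ r₀ ^ (-(n:ℝ)) * (L ^ c * r₀ ^ (n - 1) * r₀) :=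
          mul_le_mul_of_nonneg_left hI2 hrneg
      _ = L ^ c * (r₀ ^ (-(n:ℝ)) * (r₀ ^ (n-1) * r₀)) := by ring
      _ = L ^ c := by rw [hrn, hcancel, mul_one]
  have hfac2_0 : 0 ≤ r₀ ^ (-(n:ℝ)) *
      (∫ r in Ioo (0:ℝ) r₀, (Real.log (Real.log (1/r))) ^ c * r ^ (n - 1)) :=
    mul_nonneg hrneg hI2nonneg
  have hLc0 : 0 ≤ L ^ c := Real.rpow_nonneg hL0.le c
  -- combine
  have hLpow : (L ^ c) ^ (n - 1) = L ^ (-(n:ℝ)) := by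
    rw [← Real.rpow_natCast (L ^ c) (n-1), ← Real.rpow_mul hL0.le]
    congr 1
    have hcast : ((n - 1 : ℕ) : ℝ) = (n:ℝ) - 1 := by
      push_cast [Nat.cast_sub hn1]; ring
    rw [hcast, hc_def]
    have h1n : (1:ℝ) - (n:ℝ) ≠ 0 := by linarith
    field_simp
    ring
  have hLn1 : L ^ n * L ^ (-(n:ℝ)) = 1 := by
    rw [← Real.rpow_natCast L n, ← Real.rpow_add hL0, add_neg_cancel, Real.rpow_zero]
  have hLneg1 : L ^ (-(n:ℝ)) ≤ 1 :=
    Real.rpow_le_one_of_one_le_of_nonpos hL1.le (by simp [neg_nonpos])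
  have hLneg0 : 0 ≤ L ^ (-(n:ℝ)) := Real.rpow_nonneg hL0.le _
  calc (r₀ ^ (-(n : ℝ)) *
          ∫ r in Set.Ioo (0:ℝ) r₀, (Real.log (Real.log (1/r))) ^ n * r ^ (n - 1)) *
      (r₀ ^ (-(n : ℝ)) *
          ∫ r in Set.Ioo (0:ℝ) r₀,
            (Real.log (Real.log (1/r))) ^ c * r ^ (n - 1)) ^ (n - 1)
      ≤ A * (L ^ c) ^ (n - 1) := by
        refine mul_le_mul hfac1 (pow_le_pow_left₀ hfac2_0 hfac2 (n-1)) ?_ hA0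
        exact pow_nonneg hfac2_0 (n-1)
    _ = A * L ^ (-(n:ℝ)) := by rw [hLpow]
    _ = 2 ^ n * (L ^ n * L ^ (-(n:ℝ))) + 2 ^ n * (2 * (n:ℝ)) ^ n * L ^ (-(n:ℝ)) := by
        rw [hA_def]; ring
    _ = 2 ^ n + 2 ^ n * (2 * (n:ℝ)) ^ n * L ^ (-(n:ℝ)) := by rw [hLn1, mul_one]
    _ ≤ 2 ^ n * (1 + (2 * (n:ℝ)) ^ n) := by
        have h7 := mul_le_mul_of_nonneg_left hLneg1
          (by positivity : (0:ℝ) ≤ 2 ^ n * (2 * (n:ℝ)) ^ n)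
        nlinarith [h7]
end

section
/- For n ≥ 2, the family Δ of all rectifiable curves in B^n(0, e^{-e}) ⊂ ℝⁿ ending at the origin has weighted n-modulus zero with respect to the weight w(y) = (log log(1/|y|))^n: M_n^w(Δ) = 0. -/
open MeasureTheory Real Set ENNReal Filter

/-- A curve is a pair `(L, γ)`; it belongs to the family of rectifiable curves
in `B^n(0,R)` ending at the origin if `γ` is parametrized by arclength on
`[0,L)`, stays in the punctured ball, and tends to `0` at `L`. -/
def CurvesToZero (n : ℕ) (R : ℝ) : Set (ℝ × (ℝ → EuclideanSpace ℝ (Fin n))) :=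
  {c | 0 < c.1 ∧
    (∀ s ∈ Set.Ico (0:ℝ) c.1, ∀ t ∈ Set.Ico (0:ℝ) c.1, s ≤ t →
      eVariationOn c.2 (Set.Icc s t) = ENNReal.ofReal (t - s)) ∧
    (∀ t ∈ Set.Ico (0:ℝ) c.1,
      c.2 t ∈ Metric.ball (0 : EuclideanSpace ℝ (Fin n)) R \ {0}) ∧
    Filter.Tendsto c.2 (nhdsWithin c.1 (Set.Iio c.1)) (nhds 0)}

/-- `ρ` is admissible for a family `Γ` of arclength-parametrized curves if the
line integral of `ρ` along every curve of `Γ` is at least `1`. -/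
def Admissible (n : ℕ) (Γ : Set (ℝ × (ℝ → EuclideanSpace ℝ (Fin n))))
    (ρ : EuclideanSpace ℝ (Fin n) → ℝ≥0∞) : Prop :=
  ∀ c ∈ Γ, 1 ≤ ∫⁻ t in Set.Ico (0:ℝ) c.1, ρ (c.2 t)

/-- The weighted `p`-modulus of a curve family with weight `w`. -/
noncomputable def ModulusW (n : ℕ) (p : ℝ) (w : EuclideanSpace ℝ (Fin n) → ℝ≥0∞)
    (Γ : Set (ℝ × (ℝ → EuclideanSpace ℝ (Fin n)))) : ℝ≥0∞ :=
  ⨅ ρ ∈ {ρ : EuclideanSpace ℝ (Fin n) → ℝ≥0∞ | Measurable ρ ∧ Admissible n Γ ρ},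
    ∫⁻ x, ρ x ^ p * w x

noncomputable section
namespace Stmt9


def Rc : ℝ := Real.exp (-(Real.exp 1))

lemma Rc_pos : 0 < Rc := Real.exp_pos _

lemma one_lt_e : (1:ℝ) < Real.exp 1 := by
  have := Real.add_one_lt_exp (x := 1) one_ne_zero; linarith

lemma A_ge {r : ℝ} (hr : 0 < r) (hr' : r ≤ Rc) :
    Real.exp 1 ≤ Real.log (1 / r) := by
  rw [one_div, Real.log_inv]
  have h1 : Real.log r ≤ Real.log Rc := Real.log_le_log hr hr'
  rw [Rc, Real.log_exp] at h1
  linarith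

lemma A_gt {r : ℝ} (hr : 0 < r) (hr' : r < Rc) :
    Real.exp 1 < Real.log (1 / r) := by
  rw [one_div, Real.log_inv]
  have h1 : Real.log r < Real.log Rc := Real.log_lt_log hr hr'
  rw [Rc, Real.log_exp] at h1
  linarith

lemma B_ge {r : ℝ} (hr : 0 < r) (hr' : r ≤ Rc) :
    1 ≤ Real.log (Real.log (1 / r)) := by
  have h1 := A_ge hr hr'
  calc (1:ℝ) = Real.log (Real.exp 1) := (Real.log_exp 1).symm
    _ ≤ _ := Real.log_le_log (Real.exp_pos 1) h1

lemma B_gt {r : ℝ} (hr : 0 < r) (hr' : r < Rc) :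
    1 < Real.log (Real.log (1 / r)) := by
  have h1 := A_gt hr hr'
  calc (1:ℝ) = Real.log (Real.exp 1) := (Real.log_exp 1).symm
    _ < _ := Real.log_lt_log (Real.exp_pos 1) h1

/-- `u r = r log(1/r)` -/
def u (r : ℝ) : ℝ := r * Real.log (1 / r)

/-- `g r = r log(1/r) loglog(1/r)` -/
def g (r : ℝ) : ℝ := r * Real.log (1 / r) * Real.log (Real.log (1 / r))

lemma u_pos {r : ℝ} (hr : 0 < r) (hr' : r ≤ Rc) : 0 < u r :=
  mul_pos hr (lt_of_lt_of_le (lt_trans one_pos one_lt_e) (A_ge hr hr'))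

lemma g_pos {r : ℝ} (hr : 0 < r) (hr' : r ≤ Rc) : 0 < g r :=
  mul_pos (u_pos hr hr') (lt_of_lt_of_le one_pos (B_ge hr hr'))

lemma hasDerivAt_log_one_div {r : ℝ} (hr : 0 < r) :
    HasDerivAt (fun r => Real.log (1 / r)) (-r⁻¹) r := by
  have h1 : HasDerivAt (fun r : ℝ => 1 / r) (-(r ^ 2)⁻¹) r := by
    simpa [one_div] using hasDerivAt_inv hr.ne'
  have h2 := (Real.hasDerivAt_log (x := 1 / r) (by positivity)).comp r h1
  refine h2.congr_deriv ?_
  field_simp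

lemma hasDerivAt_u {r : ℝ} (hr : 0 < r) :
    HasDerivAt u (Real.log (1 / r) - 1) r := by
  have := (hasDerivAt_id r).mul (hasDerivAt_log_one_div hr)
  refine this.congr_deriv ?_
  field_simp
  simp only [id_eq]
  ring

lemma hasDerivAt_loglog {r : ℝ} (hr : 0 < r) (hA : Real.log (1 / r) ≠ 0) :
    HasDerivAt (fun r => Real.log (Real.log (1 / r)))
      ((Real.log (1 / r))⁻¹ * (-r⁻¹)) r :=
  by have := (Real.hasDerivAt_log hA).comp r (hasDerivAt_log_one_div hr); exact this

lemma hasDerivAt_g {r : ℝ} (hr : 0 < r) (hA : Real.log (1 / r) ≠ 0) :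
    HasDerivAt g ((Real.log (1 / r) - 1) * Real.log (Real.log (1 / r)) - 1) r := by
  have := (hasDerivAt_u hr).mul (hasDerivAt_loglog hr hA)
  refine this.congr_deriv ?_
  unfold u
  field_simp
  ring

lemma continuousOn_u : ContinuousOn u (Ioc 0 Rc) := by
  intro r hr
  exact ((hasDerivAt_u hr.1).continuousAt).continuousWithinAt

lemma continuousOn_g : ContinuousOn g (Ioc 0 Rc) := by
  intro r hr
  have hA : Real.log (1 / r) ≠ 0 := by
    have := A_ge hr.1 hr.2
    have := Real.exp_pos 1
    linarith
  exact ((hasDerivAt_g hr.1 hA).continuousAt).continuousWithinAt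

lemma u_strictMonoOn : StrictMonoOn u (Ioc 0 Rc) := by
  apply strictMonoOn_of_deriv_pos (convex_Ioc 0 Rc) continuousOn_u
  intro r hr
  rw [interior_Ioc] at hr
  rw [(hasDerivAt_u hr.1).deriv]
  have := A_gt hr.1 hr.2
  have := one_lt_e
  linarith

lemma g_strictMonoOn : StrictMonoOn g (Ioc 0 Rc) := by
  apply strictMonoOn_of_deriv_pos (convex_Ioc 0 Rc) continuousOn_g
  intro r hr
  rw [interior_Ioc] at hr
  have hA : Real.exp 1 < Real.log (1 / r) := A_gt hr.1 hr.2
  have hB : 1 < Real.log (Real.log (1 / r)) := B_gt hr.1 hr.2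
  have hA0 : Real.log (1 / r) ≠ 0 := by have := one_lt_e; linarith
  rw [(hasDerivAt_g hr.1 hA0).deriv]
  have he : (2:ℝ) < Real.exp 1 := by
    have := Real.exp_one_gt_d9; norm_num at this ⊢; linarith
  nlinarith


lemma g_def : ∀ r, g r = r * Real.log (1 / r) * Real.log (Real.log (1 / r)) := fun _ => rfl

lemma u_def : ∀ r, u r = r * Real.log (1 / r) := fun _ => rfl

lemma log_Rc_inv : Real.log (1/Rc) = Real.exp 1 := by
  rw [one_div, Real.log_inv, Rc, Real.log_exp, neg_neg]

def F (r : ℝ) : ℝ := -Real.log (Real.log (Real.log (1 / r)))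

lemma hasDerivAt_F {r : ℝ} (hr : 0 < r) (hr' : r ≤ Rc) :
    HasDerivAt F (g r)⁻¹ r := by
  have hA := A_ge hr hr'
  have hB := B_ge hr hr'
  have he := one_lt_e
  have hA0 : Real.log (1/r) ≠ 0 := by linarith
  have hB0 : Real.log (Real.log (1/r)) ≠ 0 := by linarith
  have h := ((Real.hasDerivAt_log hB0).comp r (hasDerivAt_loglog hr hA0)).neg
  refine h.congr_deriv ?_
  rw [g_def]
  have hApos : (0:ℝ) < Real.log (1/r) := by linarith
  have hBpos : (0:ℝ) < Real.log (Real.log (1/r)) := by linarith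
  field_simp

lemma integral_g_inv {a b : ℝ} (ha : 0 < a) (hab : a ≤ b) (hb : b ≤ Rc) :
    ∫ r in a..b, (g r)⁻¹ = F b - F a := by
  apply intervalIntegral.integral_eq_sub_of_hasDerivAt
  · intro x hx
    rw [uIcc_of_le hab] at hx
    exact hasDerivAt_F (lt_of_lt_of_le ha hx.1) (le_trans hx.2 hb)
  · apply ContinuousOn.intervalIntegrable
    rw [uIcc_of_le hab]
    apply ContinuousOn.inv₀
    · exact continuousOn_g.mono (fun x hx => ⟨lt_of_lt_of_le ha hx.1, le_trans hx.2 hb⟩)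
    · intro x hx; exact (g_pos (lt_of_lt_of_le ha hx.1) (le_trans hx.2 hb)).ne'

lemma lint_g_inv_top {T : ℝ} (hT : 0 < T) (hT' : T ≤ Rc) :
    ∫⁻ r in Ioo 0 T, ENNReal.ofReal (g r)⁻¹ = ⊤ := by
  set I := ∫⁻ r in Ioo (0:ℝ) T, ENNReal.ofReal (g r)⁻¹ with hI
  by_contra htop
  have key : ∀ M : ℝ, ENNReal.ofReal M ≤ I := by
    intro M
    have hb0 : 0 < T/2 := by positivity
    have hbT : T/2 < T := by linarith
    have hbR : T/2 ≤ Rc := le_trans hbT.le hT'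
    set b := T / 2 with hbdef
    have hAb : Real.exp 1 ≤ Real.log (1/b) := A_ge hb0 hbR
    have hBb : 1 ≤ Real.log (Real.log (1/b)) := B_ge hb0 hbR
    have he := one_lt_e
    set M' := max (M - F b) (Real.log (Real.log (Real.log (1/b))) + 1) with hM'
    set ε := Real.exp (-(Real.exp (Real.exp M'))) with hεdef
    have hε0 : 0 < ε := Real.exp_pos _
    have h1ε : 1/ε = Real.exp (Real.exp (Real.exp M')) := by
      rw [hεdef, one_div, ← Real.exp_neg, neg_neg]
    have hεb : ε < b := by
      rw [hεdef, ← Real.exp_log hb0]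
      apply Real.exp_lt_exp.2
      have h2 : Real.log (Real.log (Real.log (1/b))) < M' := by
        have := le_max_right (M - F b) (Real.log (Real.log (Real.log (1/b))) + 1)
        rw [← hM'] at this; linarith
      have h3 : Real.log (Real.log (1/b)) < Real.exp M' := by
        calc Real.log (Real.log (1/b))
            = Real.exp (Real.log (Real.log (Real.log (1/b)))) := by
              rw [Real.exp_log (by linarith)]
          _ < Real.exp M' := Real.exp_lt_exp.2 h2
      have h4 : Real.log (1/b) < Real.exp (Real.exp M') := by
        calc Real.log (1/b) = Real.exp (Real.log (Real.log (1/b))) := by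
              rw [Real.exp_log (by linarith)]
          _ < Real.exp (Real.exp M') := Real.exp_lt_exp.2 h3
      have h5 : Real.log b = -Real.log (1/b) := by
        rw [one_div, Real.log_inv, neg_neg]
      rw [h5]; linarith
    have hFε : F ε = -M' := by
      rw [F, h1ε, Real.log_exp, Real.log_exp, Real.log_exp]
    have hsub : Ioc ε b ⊆ Ioo (0:ℝ) T := fun x hx => ⟨lt_trans hε0 hx.1, lt_of_le_of_lt hx.2 hbT⟩
    have hint : IntegrableOn (fun r => (g r)⁻¹) (Ioc ε b) := by
      apply (ContinuousOn.integrableOn_Icc ?_).mono_set Ioc_subset_Icc_self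
      apply ContinuousOn.inv₀
      · exact continuousOn_g.mono (fun x hx => ⟨lt_of_lt_of_le hε0 hx.1, le_trans hx.2 hbR⟩)
      · intro x hx; exact (g_pos (lt_of_lt_of_le hε0 hx.1) (le_trans hx.2 hbR)).ne'
    have hnn : 0 ≤ᶠ[ae (volume.restrict (Ioc ε b))] fun r => (g r)⁻¹ := by
      filter_upwards [ae_restrict_mem measurableSet_Ioc] with x hx
      exact (inv_pos.2 (g_pos (lt_of_lt_of_le hε0 hx.1.le) (le_trans hx.2 hbR))).le
    have heq : ENNReal.ofReal (∫ r in Ioc ε b, (g r)⁻¹) = ∫⁻ r in Ioc ε b, ENNReal.ofReal (g r)⁻¹ :=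
      ofReal_integral_eq_lintegral_ofReal hint hnn
    have hval : ∫ r in Ioc ε b, (g r)⁻¹ = F b + M' := by
      rw [← intervalIntegral.integral_of_le hεb.le,
        integral_g_inv hε0 hεb.le hbR, hFε]
      ring
    have hM : M ≤ F b + M' := by
      have := le_max_left (M - F b) (Real.log (Real.log (Real.log (1/b))) + 1)
      rw [← hM'] at this; linarith
    calc ENNReal.ofReal M ≤ ENNReal.ofReal (F b + M') := ENNReal.ofReal_le_ofReal hM
      _ = ∫⁻ r in Ioc ε b, ENNReal.ofReal (g r)⁻¹ := by rw [← hval, heq]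
      _ ≤ I := lintegral_mono_set hsub
  have h1 := key (I.toReal + 1)
  have h2 : I < ENNReal.ofReal (I.toReal + 1) := by
    conv_lhs => rw [← ENNReal.ofReal_toReal htop]
    rw [ENNReal.ofReal_lt_ofReal_iff (by positivity)]
    linarith [ENNReal.toReal_nonneg (a := I)]
  exact absurd (h2.trans_le h1) (lt_irrefl _)
/-- the admissible density -/
def ρδ (n : ℕ) (δ : ℝ) : EuclideanSpace ℝ (Fin n) → ℝ≥0∞ :=
  (Metric.ball (0:EuclideanSpace ℝ (Fin n)) Rc \ {0}).indicator
    (fun y => ENNReal.ofReal (δ * (g ‖y‖)⁻¹))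

lemma measurable_ρδ (n : ℕ) (δ : ℝ) : Measurable (ρδ n δ) := by
  apply Measurable.indicator
  · apply ENNReal.measurable_ofReal.comp
    apply Measurable.const_mul
    apply Measurable.inv
    have h1 : Measurable fun y : EuclideanSpace ℝ (Fin n) => 1 / ‖y‖ :=
      measurable_const.div measurable_norm
    have h2 := Real.measurable_log.comp h1
    have h3 := Real.measurable_log.comp h2
    have : (fun y : EuclideanSpace ℝ (Fin n) => g ‖y‖)
        = fun y => ‖y‖ * Real.log (1/‖y‖) * Real.log (Real.log (1/‖y‖)) := by
      funext y; rw [g_def]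
    rw [this]
    exact (measurable_norm.mul h2).mul h3
  · exact (measurableSet_ball).diff (measurableSet_singleton 0)

lemma norm_le_of_curve {n : ℕ} {L : ℝ} {γ : ℝ → EuclideanSpace ℝ (Fin n)}
    (hvar : ∀ s ∈ Ico (0:ℝ) L, ∀ t ∈ Ico (0:ℝ) L, s ≤ t →
      eVariationOn γ (Icc s t) = ENNReal.ofReal (t - s))
    (htend : Tendsto γ (nhdsWithin L (Iio L)) (nhds 0))
    {s : ℝ} (hs : s ∈ Ico (0:ℝ) L) : ‖γ s‖ ≤ L - s := by
  have hne : (nhdsWithin L (Iio L)).NeBot := nhdsLT_neBot L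
  have hev : ∀ᶠ t in nhdsWithin L (Iio L), edist (γ s) (γ t) ≤ ENNReal.ofReal (L - s) := by
    filter_upwards [mem_nhdsWithin_of_mem_nhds (Ioi_mem_nhds hs.2), self_mem_nhdsWithin]
      with t hts htL
    have h1 : edist (γ s) (γ t) ≤ eVariationOn γ (Icc s t) :=
      eVariationOn.edist_le γ ⟨le_refl s, le_of_lt hts⟩ ⟨le_of_lt hts, le_refl t⟩
    rw [hvar s hs t ⟨le_trans hs.1 (le_of_lt hts), htL⟩ (le_of_lt hts)] at h1
    exact h1.trans (ENNReal.ofReal_le_ofReal (by simp only [mem_Iio] at htL; linarith))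
  have hlim : Tendsto (fun t => edist (γ s) (γ t)) (nhdsWithin L (Iio L))
      (nhds (edist (γ s) 0)) := tendsto_const_nhds.edist htend
  have hle : edist (γ s) 0 ≤ ENNReal.ofReal (L - s) := le_of_tendsto hlim hev
  have := (edist_le_ofReal (by linarith [hs.2])).1 hle
  rwa [dist_zero_right] at this

lemma admissible_ρδ (n : ℕ) {δ : ℝ} (hδ : 0 < δ) :
    Admissible n (CurvesToZero n Rc) (ρδ n δ) := by
  rintro ⟨L, γ⟩ ⟨hL, hvar, hmem, htend⟩
  set T := min L Rc with hT
  have hT0 : 0 < T := lt_min hL Rc_pos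
  have hTR : T ≤ Rc := min_le_right _ _
  have hTL : T ≤ L := min_le_left _ _
  have hsub : Ioo (L - T) L ⊆ Ico 0 L := fun t ht => ⟨by linarith [ht.1], ht.2⟩
  have hbound : ∀ t ∈ Ioo (L - T) L, ENNReal.ofReal (δ * (g (L - t))⁻¹) ≤ ρδ n δ (γ t) := by
    intro t ht
    have htI : t ∈ Ico (0:ℝ) L := hsub ht
    obtain ⟨hball, hne0⟩ := hmem t htI
    have hne0' : γ t ≠ 0 := by simpa using hne0
    have hnorm_pos : 0 < ‖γ t‖ := norm_pos_iff.2 hne0'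
    have hnormR : ‖γ t‖ < Rc := by rwa [mem_ball_zero_iff] at hball
    have hLt0 : 0 < L - t := by linarith [ht.2]
    have hLtR : L - t ≤ Rc := le_trans (by linarith [ht.1]) hTR
    have hnle : ‖γ t‖ ≤ L - t := norm_le_of_curve hvar htend htI
    have hg' : g ‖γ t‖ ≤ g (L - t) := by
      rcases eq_or_lt_of_le hnle with h | h
      · rw [h]
      · exact (g_strictMonoOn ⟨hnorm_pos, hnormR.le⟩ ⟨hLt0, hLtR⟩ h).le
    have hmemS : γ t ∈ Metric.ball (0:EuclideanSpace ℝ (Fin n)) Rc \ {0} := ⟨hball, hne0⟩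
    rw [ρδ, indicator_of_mem hmemS]
    apply ENNReal.ofReal_le_ofReal
    apply mul_le_mul_of_nonneg_left _ hδ.le
    exact inv_anti₀ (g_pos hnorm_pos hnormR.le) hg'
  have h1 : ∫⁻ t in Ioo (L-T) L, ENNReal.ofReal (δ * (g (L-t))⁻¹)
      ≤ ∫⁻ t in Ico (0:ℝ) L, ρδ n δ (γ t) :=
    le_trans (setLIntegral_mono' measurableSet_Ioo hbound)
      (lintegral_mono_set hsub)
  have h2 : ∫⁻ t in Ioo (L-T) L, ENNReal.ofReal (δ * (g (L-t))⁻¹)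
      = ∫⁻ u in Ioo (0:ℝ) T, ENNReal.ofReal (δ * (g u)⁻¹) := by
    have hmp : MeasurePreserving (fun t : ℝ => L - t) volume volume :=
      Measure.measurePreserving_sub_left volume L
    have hemb : MeasurableEmbedding (fun t : ℝ => L - t) :=
      (MeasurableEquiv.subLeft L).measurableEmbedding
    have hpre : (fun t : ℝ => L - t) ⁻¹' (Ioo 0 T) = Ioo (L - T) L := by
      ext t
      simp only [mem_preimage, mem_Ioo]
      constructor <;> rintro ⟨a, b⟩ <;> constructor <;> linarith
    rw [← hpre]
    exact hmp.setLIntegral_comp_preimage_emb hemb (fun u => ENNReal.ofReal (δ * (g u)⁻¹)) (Ioo 0 T)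
  have h3 : ∫⁻ u in Ioo (0:ℝ) T, ENNReal.ofReal (δ * (g u)⁻¹) = ⊤ := by
    have hmul : ∀ u : ℝ, ENNReal.ofReal (δ * (g u)⁻¹)
        = ENNReal.ofReal δ * ENNReal.ofReal (g u)⁻¹ := fun u => ENNReal.ofReal_mul hδ.le
    simp_rw [hmul]
    rw [lintegral_const_mul' _ _ ENNReal.ofReal_ne_top, lint_g_inv_top hT0 hTR,
      ENNReal.mul_top]
    simpa using hδ
  rw [h2, h3] at h1
  exact le_trans le_top h1
lemma exists_annulus {r : ℝ} (h0 : 0 < r) (hR : r < Rc) :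
    ∃ k : ℕ, Rc * (1/2)^(k+1) < r ∧ r ≤ Rc * (1/2)^k := by
  have hex : ∃ N : ℕ, Rc * (1/2)^(N+1) < r := by
    obtain ⟨N, hN⟩ := exists_pow_lt_of_lt_one (div_pos h0 Rc_pos) (by norm_num : (1/2:ℝ) < 1)
    refine ⟨N, ?_⟩
    have h1 : Rc * ((1/2:ℝ))^N < Rc * (r / Rc) := by
      exact mul_lt_mul_of_pos_left hN Rc_pos
    have h2 : Rc * (r / Rc) = r := by
      rw [mul_comm, div_mul_eq_mul_div, mul_div_assoc, div_self Rc_pos.ne', mul_one]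
    have h3 : Rc * ((1/2:ℝ))^(N+1) ≤ Rc * ((1/2:ℝ))^N := by
      apply mul_le_mul_of_nonneg_left _ Rc_pos.le
      apply pow_le_pow_of_le_one (by norm_num) (by norm_num) (Nat.le_succ N)
    linarith
  classical
  refine ⟨Nat.find hex, Nat.find_spec hex, ?_⟩
  rcases Nat.eq_zero_or_pos (Nat.find hex) with hk | hk
  · rw [hk]; simpa using hR.le
  · have hmin := Nat.find_min hex (m := Nat.find hex - 1) (by omega)
    push_neg at hmin
    have : Nat.find hex - 1 + 1 = Nat.find hex := by omega
    rwa [this] at hmin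

/-- the radial profile of `ρ₁ ^ n * w` -/
def hfun (n : ℕ) (r : ℝ) : ℝ := ((u r)⁻¹)^n

lemma hfun_nonneg (n : ℕ) {r : ℝ} (h0 : 0 < r) (hR : r ≤ Rc) : 0 ≤ hfun n r := by
  have := u_pos h0 hR; rw [hfun]; positivity

lemma C_lt_top (n : ℕ) (hn : 2 ≤ n) :
    ∫⁻ x in Metric.ball (0:EuclideanSpace ℝ (Fin n)) Rc \ {0},
      ENNReal.ofReal (hfun n ‖x‖) < ⊤ := by
  have hlog2 : 0 < Real.log 2 := Real.log_pos one_lt_two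
  set K := (2 / Real.log 2)^n with hK
  have hK0 : 0 ≤ K := by positivity
  set A : ℕ → Set (EuclideanSpace ℝ (Fin n)) :=
    fun k => {x | ‖x‖ ∈ Ioc (Rc*(1/2)^(k+1)) (Rc*(1/2)^k)} with hA
  have hcover : Metric.ball (0:EuclideanSpace ℝ (Fin n)) Rc \ {0} ⊆ ⋃ k, A k := by
    rintro x ⟨hb, hx0⟩
    have h0 : 0 < ‖x‖ := norm_pos_iff.2 (by simpa using hx0)
    have hR : ‖x‖ < Rc := by rwa [mem_ball_zero_iff] at hb
    obtain ⟨k, h1, h2⟩ := exists_annulus h0 hR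
    exact mem_iUnion.2 ⟨k, h1, h2⟩
  have hAmeas : ∀ k, MeasurableSet (A k) := fun k => measurable_norm measurableSet_Ioc
  set V := volume (Metric.ball (0:EuclideanSpace ℝ (Fin n)) 1) with hV
  have hVlt : V < ⊤ := measure_ball_lt_top
  have hbound : ∀ k : ℕ, ∫⁻ x in A k, ENNReal.ofReal (hfun n ‖x‖)
      ≤ ENNReal.ofReal (K * (1/((k:ℝ)+1)^2)) * V := by
    intro k
    set a := Rc * (1/2:ℝ)^(k+1) with hadef
    set b := Rc * (1/2:ℝ)^k with hbdef
    have ha0 : 0 < a := mul_pos Rc_pos (by positivity)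
    have hb0 : 0 < b := mul_pos Rc_pos (by positivity)
    have hab : b = 2 * a := by rw [hadef, hbdef, pow_succ]; ring
    have hbR : b ≤ Rc := by
      rw [hbdef]
      nth_rewrite 2 [show Rc = Rc * 1 by ring]
      apply mul_le_mul_of_nonneg_left _ Rc_pos.le
      exact pow_le_one₀ (by norm_num) (by norm_num)
    have haR : a ≤ Rc := by
      have : a ≤ b := by linarith
      linarith
    -- value of log (1/a)
    have hA' : Real.log (1/a) = Real.exp 1 + ((k:ℝ)+1) * Real.log 2 := by
      have h2 : (1:ℝ)/a = (1/Rc) * 2^(k+1) := by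
        rw [hadef]; field_simp
        rw [← mul_pow]; norm_num
      rw [h2, Real.log_mul (one_div_ne_zero Rc_pos.ne') (by positivity), log_Rc_inv, Real.log_pow]
      push_cast; ring
    have hA'pos : 0 < Real.log (1/a) := by
      rw [hA']; positivity
    have hA'ge : ((k:ℝ)+1) * Real.log 2 ≤ Real.log (1/a) := by
      rw [hA']; linarith [Real.exp_pos 1]
    -- pointwise bound on the annulus
    have hstep : ∀ x ∈ A k, ENNReal.ofReal (hfun n ‖x‖) ≤ ENNReal.ofReal (hfun n a) := by
      intro x hx
      obtain ⟨hx1, hx2⟩ : ‖x‖ ∈ Ioc a b := hx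
      have hxpos : 0 < ‖x‖ := lt_trans ha0 hx1
      have hxR : ‖x‖ ≤ Rc := le_trans hx2 hbR
      have hu : u a ≤ u ‖x‖ :=
        (u_strictMonoOn ⟨ha0, haR⟩ ⟨hxpos, hxR⟩ hx1).le
      apply ENNReal.ofReal_le_ofReal
      rw [hfun, hfun]
      apply pow_le_pow_left₀ (inv_nonneg.2 (u_pos hxpos hxR).le)
      exact inv_anti₀ (u_pos ha0 haR) hu
    -- the key numeric inequality
    have hkey : hfun n a * b^n ≤ K * (1/((k:ℝ)+1)^2) := by
      have hupos : 0 < u a := u_pos ha0 haR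
      have heq : hfun n a * b^n = (2 / Real.log (1/a))^n := by
        rw [hfun, hab, ← mul_pow]
        congr 1
        rw [u_def]
        field_simp
      rw [heq]
      have h1 : 2 / Real.log (1/a) ≤ (2/Real.log 2) * (1/((k:ℝ)+1)) := by
        have h2 : 2 / Real.log (1/a) ≤ 2 / (((k:ℝ)+1) * Real.log 2) := by
          apply div_le_div_of_nonneg_left (by norm_num) (by positivity) hA'ge
        have h3 : 2 / (((k:ℝ)+1) * Real.log 2) = (2/Real.log 2) * (1/((k:ℝ)+1)) := by
          field_simp
        linarith
      calc (2 / Real.log (1/a))^n ≤ ((2/Real.log 2) * (1/((k:ℝ)+1)))^n := by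
            apply pow_le_pow_left₀ (by positivity) h1
        _ = K * (1/((k:ℝ)+1))^n := by rw [mul_pow, hK]
        _ ≤ K * (1/((k:ℝ)+1))^2 := by
            apply mul_le_mul_of_nonneg_left _ hK0
            apply pow_le_pow_of_le_one (by positivity) _ hn
            rw [div_le_one (by positivity)]
            norm_num
        _ = K * (1/((k:ℝ)+1)^2) := by rw [div_pow]; norm_num
    have hsubball : A k ⊆ Metric.closedBall (0:EuclideanSpace ℝ (Fin n)) b := by
      intro x hx
      rw [Metric.mem_closedBall, dist_zero_right]
      exact hx.2
    calc ∫⁻ x in A k, ENNReal.ofReal (hfun n ‖x‖)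
        ≤ ∫⁻ _x in A k, ENNReal.ofReal (hfun n a) := setLIntegral_mono' (hAmeas k) hstep
      _ = ENNReal.ofReal (hfun n a) * volume (A k) := setLIntegral_const _ _
      _ ≤ ENNReal.ofReal (hfun n a) *
          volume (Metric.closedBall (0:EuclideanSpace ℝ (Fin n)) b) := by
          exact mul_le_mul_right (measure_mono hsubball) _
      _ = ENNReal.ofReal (hfun n a) * (ENNReal.ofReal (b ^ n) * V) := by
          rw [Measure.addHaar_closedBall _ _ hb0.le, finrank_euclideanSpace_fin]
      _ = ENNReal.ofReal (hfun n a * b ^ n) * V := by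
          rw [ENNReal.ofReal_mul (hfun_nonneg n ha0 haR), mul_assoc]
      _ ≤ ENNReal.ofReal (K * (1/((k:ℝ)+1)^2)) * V := by
          exact mul_le_mul_left (ENNReal.ofReal_le_ofReal hkey) _
  have hsum : Summable (fun k : ℕ => K * (1/((k:ℝ)+1)^2)) := by
    apply Summable.mul_left
    have hbase : Summable (fun k : ℕ => 1/((k:ℝ))^2) :=
      summable_one_div_nat_pow.2 (by norm_num)
    have := (summable_nat_add_iff 1).2 hbase
    apply this.congr
    intro k; push_cast; ring
  calc ∫⁻ x in Metric.ball (0:EuclideanSpace ℝ (Fin n)) Rc \ {0},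
        ENNReal.ofReal (hfun n ‖x‖)
      ≤ ∫⁻ x in ⋃ k, A k, ENNReal.ofReal (hfun n ‖x‖) := lintegral_mono_set hcover
    _ ≤ ∑' (k : ℕ), ∫⁻ x in A k, ENNReal.ofReal (hfun n ‖x‖) := lintegral_iUnion_le _ _
    _ ≤ ∑' (k : ℕ), ENNReal.ofReal (K * (1/((k:ℝ)+1)^2)) * V := ENNReal.tsum_le_tsum hbound
    _ = (∑' (k : ℕ), ENNReal.ofReal (K * (1/((k:ℝ)+1)^2))) * V := ENNReal.tsum_mul_right
    _ < ⊤ := by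
        apply ENNReal.mul_lt_top _ hVlt
        rw [← ENNReal.ofReal_tsum_of_nonneg (fun k => by positivity) hsum]
        exact ENNReal.ofReal_lt_top

end Stmt9
end

/-- The family of all rectifiable curves in `B^n(0, e^{-e})` ending at the
origin has weighted `n`-modulus zero with respect to the weight
`w(y) = (log log (1/|y|))^n`. -/
theorem stmt9 (n : ℕ) (hn : 2 ≤ n) :
    ModulusW n n
      (fun y => ENNReal.ofReal ((Real.log (Real.log (1/‖y‖))) ^ n))
      (CurvesToZero n (Real.exp (-(Real.exp 1)))) = 0 := by
  classical
  have hSmeas : MeasurableSet (Metric.ball (0:EuclideanSpace ℝ (Fin n)) Stmt9.Rc \ {0}) :=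
    measurableSet_ball.diff (measurableSet_singleton 0)
  set S := Metric.ball (0:EuclideanSpace ℝ (Fin n)) Stmt9.Rc \ {0} with hS
  set C := ∫⁻ x in S, ENNReal.ofReal (Stmt9.hfun n ‖x‖) with hC
  have hCtop : C ≠ ⊤ := (Stmt9.C_lt_top n hn).ne
  have key : ∀ δ : ℝ, 0 < δ → δ ≤ 1 →
      ModulusW n n (fun y => ENNReal.ofReal ((Real.log (Real.log (1/‖y‖))) ^ n))
        (CurvesToZero n (Real.exp (-(Real.exp 1)))) ≤ ENNReal.ofReal δ * C := by
    intro δ hδ hδ1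
    have hmem : Stmt9.ρδ n δ ∈ {ρ : EuclideanSpace ℝ (Fin n) → ℝ≥0∞ |
        Measurable ρ ∧ Admissible n (CurvesToZero n (Real.exp (-(Real.exp 1)))) ρ} :=
      ⟨Stmt9.measurable_ρδ n δ, Stmt9.admissible_ρδ n hδ⟩
    have hstart : ModulusW n n (fun y => ENNReal.ofReal ((Real.log (Real.log (1/‖y‖))) ^ n))
        (CurvesToZero n (Real.exp (-(Real.exp 1))))
        ≤ ∫⁻ x, Stmt9.ρδ n δ x ^ (n:ℝ) *
            ENNReal.ofReal ((Real.log (Real.log (1/‖x‖))) ^ n) := by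
      unfold ModulusW
      exact iInf₂_le (Stmt9.ρδ n δ) hmem
    refine le_trans hstart ?_
    have hptw : ∀ x : EuclideanSpace ℝ (Fin n),
        Stmt9.ρδ n δ x ^ (n:ℝ) * ENNReal.ofReal ((Real.log (Real.log (1/‖x‖))) ^ n)
          = S.indicator (fun x => ENNReal.ofReal (δ^n * Stmt9.hfun n ‖x‖)) x := by
      intro x
      by_cases hx : x ∈ S
      · rw [indicator_of_mem hx, Stmt9.ρδ, indicator_of_mem hx]
        obtain ⟨hb, h0'⟩ := hx
        have h0 : 0 < ‖x‖ := norm_pos_iff.2 (by simpa using h0')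
        have hRx : ‖x‖ < Stmt9.Rc := by rwa [mem_ball_zero_iff] at hb
        have hgpos : 0 < Stmt9.g ‖x‖ := Stmt9.g_pos h0 hRx.le
        have hupos : 0 < Stmt9.u ‖x‖ := Stmt9.u_pos h0 hRx.le
        have hBpos : 0 < Real.log (Real.log (1/‖x‖)) :=
          lt_of_lt_of_le one_pos (Stmt9.B_ge h0 hRx.le)
        rw [ENNReal.ofReal_rpow_of_pos (mul_pos hδ (inv_pos.2 hgpos)),
          Real.rpow_natCast, ← ENNReal.ofReal_mul (by positivity)]
        congr 1
        rw [Stmt9.hfun, ← mul_pow, ← mul_pow]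
        congr 1
        have hgu : Stmt9.g ‖x‖ = Stmt9.u ‖x‖ * Real.log (Real.log (1/‖x‖)) := rfl
        rw [hgu, mul_inv]
        field_simp
      · rw [indicator_of_notMem hx, Stmt9.ρδ, indicator_of_notMem hx,
          ENNReal.zero_rpow_of_pos (by exact_mod_cast Nat.pos_of_ne_zero (by omega)), zero_mul]
    have heval : ∫⁻ x, Stmt9.ρδ n δ x ^ (n:ℝ) *
        ENNReal.ofReal ((Real.log (Real.log (1/‖x‖))) ^ n)
        = ENNReal.ofReal (δ^n) * C := by
      simp_rw [hptw]
      rw [lintegral_indicator hSmeas]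
      have hsplit : ∀ x : EuclideanSpace ℝ (Fin n), ENNReal.ofReal (δ^n * Stmt9.hfun n ‖x‖)
          = ENNReal.ofReal (δ^n) * ENNReal.ofReal (Stmt9.hfun n ‖x‖) :=
        fun x => ENNReal.ofReal_mul (by positivity)
      simp_rw [hsplit]
      rw [lintegral_const_mul' _ _ ENNReal.ofReal_ne_top, hC]
    rw [heval]
    apply mul_le_mul_left
    apply ENNReal.ofReal_le_ofReal
    exact pow_le_of_le_one hδ.le hδ1 (by omega)
  have htend : Tendsto (fun k : ℕ => ENNReal.ofReal ((1/2:ℝ)^(k+1)) * C) atTop (nhds 0) := by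
    have h1 : Tendsto (fun k : ℕ => ((1/2:ℝ))^(k+1)) atTop (nhds 0) := by
      have := tendsto_pow_atTop_nhds_zero_of_lt_one (by norm_num : (0:ℝ) ≤ 1/2)
        (by norm_num : (1/2:ℝ) < 1)
      exact this.comp (tendsto_add_atTop_nat 1)
    have h2 := ENNReal.tendsto_ofReal h1
    have h3 := ENNReal.Tendsto.mul_const h2 (Or.inr hCtop)
    simpa using h3
  apply le_antisymm _ zero_le
  refine ge_of_tendsto' htend ?_
  intro k
  exact key _ (by positivity) (pow_le_one₀ (by norm_num) (by norm_num))
end
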